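/- There exists a unique c > 2/√3 such that h₁(c) = π/2, where h₁(c) = ∫_{π/3}^{2π/3} (1 − R⁻(c·sin ψ)²)⁻¹ dψ. (This is the analytic content of the existence and uniqueness of the degenerate 'half 4-ray star' shrinker of type DD → CD → CD → CC with 2h₁ = π: h₁ is continuous and strictly decreasing on [2/√3, ∞), with h₁(2/√3) > π/2 and lim_{c→∞} h₁(c) = π/3.) -/

import Mathlib

open Real

noncomputable def K (R : ℝ) : ℝ := Real.exp ((R ^ 2 - 1) / 2) / R

lemma hasDerivAt_K {x : ℝ} (hx : x ≠ 0) :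
    HasDerivAt K (Real.exp ((x ^ 2 - 1) / 2) * (x ^ 2 - 1) / x ^ 2) x := by
  have h1 : HasDerivAt (fun y : ℝ => (y ^ 2 - 1) / 2) x x := by
    simpa using ((hasDerivAt_pow 2 x).sub_const 1).div_const 2
  have h2 := h1.exp
  have h3 := h2.div (hasDerivAt_id x) hx
  refine h3.congr_deriv ?_
  simp only [id]
  field_simp

lemma K_strictAntiOn : StrictAntiOn K (Set.Ioc 0 1) := by
  apply strictAntiOn_of_deriv_neg (convex_Ioc 0 1)
  · exact fun x hx => (hasDerivAt_K (ne_of_gt hx.1)).continuousAt.continuousWithinAt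
  · intro x hx
    rw [interior_Ioc] at hx
    rw [(hasDerivAt_K (ne_of_gt hx.1)).deriv]
    apply div_neg_of_neg_of_pos
    · exact mul_neg_of_pos_of_neg (Real.exp_pos _) (by nlinarith [hx.1, hx.2])
    · exact pow_pos hx.1 2

section Rm

variable {Rm : ℝ → ℝ} (hRm : ∀ x : ℝ, 1 < x → 0 < Rm x ∧ Rm x < 1 ∧ K (Rm x) = x)
include hRm

lemma Rm_anti {x y : ℝ} (hx : 1 < x) (hxy : x < y) : Rm y < Rm x := by
  obtain ⟨hx0, hx1, hKx⟩ := hRm x hx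
  obtain ⟨hy0, hy1, hKy⟩ := hRm y (hx.trans hxy)
  by_contra h
  push_neg at h
  rcases eq_or_lt_of_le h with h | h
  · rw [h, hKy] at hKx; linarith
  · have := K_strictAntiOn ⟨hx0, hx1.le⟩ ⟨hy0, hy1.le⟩ h
    rw [hKx, hKy] at this; linarith

lemma Rm_contOn : ContinuousOn Rm (Set.Ioi 1) := by
  intro x hx
  obtain ⟨hx0, hx1, hKx⟩ := hRm x hx
  rw [Metric.continuousWithinAt_iff]
  intro ε hε
  set ε' := min (ε / 2) (min (Rm x / 2) ((1 - Rm x) / 2)) with hε'def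
  have hε'pos : 0 < ε' := by
    apply lt_min (by linarith) (lt_min (by linarith) (by linarith))
  have hε'mem : Rm x - ε' ∈ Set.Ioc (0:ℝ) 1 := by
    constructor
    · have : ε' ≤ Rm x / 2 := (min_le_right _ _).trans (min_le_left _ _)
      linarith
    · linarith
  have hε'mem2 : Rm x + ε' ∈ Set.Ioc (0:ℝ) 1 := by
    constructor
    · linarith
    · have : ε' ≤ (1 - Rm x) / 2 := (min_le_right _ _).trans (min_le_right _ _)
      linarith
  have hKa : x < K (Rm x - ε') := by
    have := K_strictAntiOn hε'mem ⟨hx0, hx1.le⟩ (by linarith)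
    rwa [hKx] at this
  have hKb : K (Rm x + ε') < x := by
    have := K_strictAntiOn ⟨hx0, hx1.le⟩ hε'mem2 (by linarith)
    rwa [hKx] at this
  refine ⟨min (K (Rm x - ε') - x) (x - K (Rm x + ε')), lt_min (by linarith) (by linarith), ?_⟩
  intro y hy hdist
  obtain ⟨hy0, hy1, hKy⟩ := hRm y hy
  rw [Real.dist_eq] at hdist ⊢
  rw [lt_min_iff] at hdist
  obtain ⟨hd1, hd2⟩ := hdist
  rw [abs_sub_lt_iff] at hd1 hd2
  have h1 : K (Rm x + ε') < y := by linarith [hd2.2]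
  have h2 : y < K (Rm x - ε') := by linarith [hd1.1]
  have hA : Rm y < Rm x + ε' := by
    by_contra hh
    push_neg at hh
    rcases eq_or_lt_of_le hh with hh | hh
    · rw [hh, hKy] at h1; linarith
    · have := K_strictAntiOn hε'mem2 ⟨hy0, hy1.le⟩ hh
      rw [hKy] at this; linarith
  have hB : Rm x - ε' < Rm y := by
    by_contra hh
    push_neg at hh
    rcases eq_or_lt_of_le hh with hh | hh
    · rw [← hh, hKy] at h2; linarith
    · have := K_strictAntiOn ⟨hy0, hy1.le⟩ hε'mem (by linarith)
      rw [hKy] at this; linarith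
  have : ε' ≤ ε / 2 := min_le_left _ _
  rw [abs_sub_lt_iff]
  constructor <;> linarith

lemma Rm_lower {x : ℝ} (hx : 1 < x) :
    1 / 2 + x / (2 * Real.sqrt (x ^ 2 - 1)) ≤ (1 - Rm x ^ 2)⁻¹ := by
  obtain ⟨h0, h1, hK⟩ := hRm x hx
  set R := Rm x with hR
  set s := Real.sqrt (x ^ 2 - 1) with hs
  have hs0 : 0 < s := Real.sqrt_pos.2 (by nlinarith)
  have hs2 : s ^ 2 = x ^ 2 - 1 := Real.sq_sqrt (by nlinarith)
  have hxR : x * R = Real.exp ((R ^ 2 - 1) / 2) := by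
    have h := hK
    unfold K at h
    field_simp at h
    linarith
  have h2 : (1 + R ^ 2) / 2 ≤ x * R := by
    rw [hxR]
    have := Real.add_one_le_exp ((R ^ 2 - 1) / 2)
    linarith
  have h4 : x - R ≤ s := by nlinarith
  have h6 : 1 - R ^ 2 ≤ 2 * s * (x - s) := by nlinarith
  have h7 : 0 < 1 - R ^ 2 := by nlinarith
  rw [← one_div, le_div_iff₀ h7]
  have hxs : 0 < x - s := by nlinarith
  have key : (1 / 2 + x / (2 * s)) * (2 * s * (x - s)) ≤ 1 := by
    have : (1 / 2 + x / (2 * s)) * (2 * s * (x - s)) = (s + x) * (x - s) := by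
      field_simp
    rw [this]; nlinarith
  calc (1 / 2 + x / (2 * s)) * (1 - R ^ 2)
      ≤ (1 / 2 + x / (2 * s)) * (2 * s * (x - s)) := by
        apply mul_le_mul_of_nonneg_left h6
        positivity
    _ ≤ 1 := key

lemma Rm_upper {x : ℝ} (hx : 2 ≤ x) : (1 - Rm x ^ 2)⁻¹ ≤ 4 / 3 := by
  obtain ⟨h0, h1, hK⟩ := hRm x (by linarith)
  have hxR : x * Rm x = Real.exp ((Rm x ^ 2 - 1) / 2) := by
    have h := hK
    unfold K at h
    field_simp at h
    linarith
  have he : Real.exp ((Rm x ^ 2 - 1) / 2) ≤ 1 :=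
    Real.exp_le_one_iff.2 (by nlinarith)
  have hRle : Rm x ≤ 1 / 2 := by nlinarith
  have h7 : 3 / 4 ≤ 1 - Rm x ^ 2 := by nlinarith
  calc (1 - Rm x ^ 2)⁻¹ ≤ (3 / 4 : ℝ)⁻¹ := by
        apply inv_anti₀ (by norm_num) h7
    _ = 4 / 3 := by norm_num
omit hRm in
lemma sin_lb {ψ : ℝ} (h : ψ ∈ Set.Icc (π / 3) (2 * π / 3)) :
    Real.sqrt 3 / 2 ≤ Real.sin ψ := by
  obtain ⟨h1, h2⟩ := h
  have hpi := Real.pi_pos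
  have e1 : Real.sin ψ = Real.cos (ψ - π / 2) := by
    rw [← Real.cos_pi_div_two_sub, ← Real.cos_neg]
    ring_nf
  rw [e1, ← Real.cos_abs, ← Real.cos_pi_div_six]
  apply Real.cos_le_cos_of_nonneg_of_le_pi (abs_nonneg _) (by linarith)
  rw [abs_le]
  constructor <;> linarith

omit hRm in
lemma cos_bound {ψ : ℝ} (h : ψ ∈ Set.Icc (π / 3) (2 * π / 3)) :
    |Real.cos ψ| ≤ 1 / 2 := by
  obtain ⟨h1, h2⟩ := h
  have hpi := Real.pi_pos
  rw [abs_le]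
  constructor
  · have : Real.cos (2 * π / 3) ≤ Real.cos ψ :=
      Real.cos_le_cos_of_nonneg_of_le_pi (by linarith) (by linarith) h2
    have e : Real.cos (2 * π / 3) = -(1 / 2) := by
      have : (2 : ℝ) * π / 3 = π - π / 3 := by ring
      rw [this, Real.cos_pi_sub, Real.cos_pi_div_three]
    linarith
  · have : Real.cos ψ ≤ Real.cos (π / 3) :=
      Real.cos_le_cos_of_nonneg_of_le_pi (by linarith) (by linarith) h1
    rw [Real.cos_pi_div_three] at this
    linarith

omit hRm in
lemma sqrt3_lt : 5 / 3 < Real.sqrt 3 := by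
  have h := Real.sq_sqrt (by norm_num : (3:ℝ) ≥ 0)
  nlinarith [Real.sqrt_nonneg 3]

omit hRm in
lemma two_div_sqrt3_lt {c : ℝ} (hc : 6 / 5 ≤ c) : 2 / Real.sqrt 3 < c := by
  have h := sqrt3_lt
  have h2 : 2 / Real.sqrt 3 < 6 / 5 := by
    rw [div_lt_iff₀ (by linarith)]
    nlinarith
  linarith

omit hRm in
lemma x_gt_one {c ψ : ℝ} (hc : 2 / Real.sqrt 3 < c) (hψ : ψ ∈ Set.Icc (π / 3) (2 * π / 3)) :
    1 < c * Real.sin ψ := by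
  have h3 : (0:ℝ) < Real.sqrt 3 := Real.sqrt_pos.2 (by norm_num)
  have hs := sin_lb hψ
  have hc0 : 0 < c := lt_trans (by positivity) hc
  have e : 2 / Real.sqrt 3 * (Real.sqrt 3 / 2) = 1 := by
    field_simp
  calc 1 = 2 / Real.sqrt 3 * (Real.sqrt 3 / 2) := e.symm
    _ < c * (Real.sqrt 3 / 2) := by
        apply mul_lt_mul_of_pos_right hc (by positivity)
    _ ≤ c * Real.sin ψ := by
        apply mul_le_mul_of_nonneg_left hs hc0.le

lemma G_contOn : ContinuousOn (fun x => (1 - Rm x ^ 2)⁻¹) (Set.Ioi 1) := by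
  apply ContinuousOn.inv₀
  · exact continuousOn_const.sub ((Rm_contOn hRm).pow 2)
  · intro x hx
    obtain ⟨h0, h1, _⟩ := hRm x hx
    nlinarith

lemma integrand_contOn {c : ℝ} (hc : 2 / Real.sqrt 3 < c) :
    ContinuousOn (fun ψ => (1 - Rm (c * Real.sin ψ) ^ 2)⁻¹)
      (Set.Icc (π / 3) (2 * π / 3)) := by
  apply (G_contOn hRm).comp
    ((continuous_const.mul Real.continuous_sin).continuousOn)
  intro ψ hψ
  exact x_gt_one hc hψ

lemma integrand_intervalIntegrable {c : ℝ} (hc : 2 / Real.sqrt 3 < c) :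
    IntervalIntegrable (fun ψ => (1 - Rm (c * Real.sin ψ) ^ 2)⁻¹)
      MeasureTheory.volume (π / 3) (2 * π / 3) := by
  apply ContinuousOn.intervalIntegrable
  rw [Set.uIcc_of_le (by linarith [Real.pi_pos])]
  exact integrand_contOn hRm hc

omit hRm in
lemma sin_sq_lb {c ψ : ℝ} (hc : 4 / 3 < c ^ 2) (hψ : ψ ∈ Set.Icc (π / 3) (2 * π / 3)) :
    0 < c ^ 2 * Real.sin ψ ^ 2 - 1 := by
  have h1 := cos_bound hψ
  have h2 : Real.cos ψ ^ 2 ≤ 1 / 4 := by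
    have := sq_abs (Real.cos ψ)
    nlinarith [abs_nonneg (Real.cos ψ)]
  have h3 := Real.sin_sq_add_cos_sq ψ
  nlinarith

omit hRm in
lemma ftc_arcsin {c : ℝ} (hc : 4 / 3 < c ^ 2) (hc0 : 0 < c) :
    (∫ ψ in (π / 3)..(2 * π / 3),
        c * Real.sin ψ / (2 * Real.sqrt (c ^ 2 * Real.sin ψ ^ 2 - 1)))
      = Real.arcsin (c / (2 * Real.sqrt (c ^ 2 - 1))) := by
  have hpi := Real.pi_pos
  set s := Real.sqrt (c ^ 2 - 1) with hs
  have hs0 : 0 < s := Real.sqrt_pos.2 (by nlinarith)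
  have hs2 : s ^ 2 = c ^ 2 - 1 := Real.sq_sqrt (by nlinarith)
  have hcs : c < 2 * s := by nlinarith
  have hderiv : ∀ ψ ∈ Set.uIcc (π / 3) (2 * π / 3),
      HasDerivAt (fun ψ => -(1 / 2) * Real.arcsin (c * Real.cos ψ / s))
        (c * Real.sin ψ / (2 * Real.sqrt (c ^ 2 * Real.sin ψ ^ 2 - 1))) ψ := by
    intro ψ hψ
    rw [Set.uIcc_of_le (by linarith)] at hψ
    have hcb := cos_bound hψ
    have hu : |c * Real.cos ψ / s| < 1 := by
      rw [abs_div, abs_mul, abs_of_pos hc0, abs_of_pos hs0, div_lt_one hs0]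
      nlinarith [abs_nonneg (Real.cos ψ)]
    rw [abs_lt] at hu
    have hu1 : c * Real.cos ψ / s ≠ -1 := by linarith
    have hu2 : c * Real.cos ψ / s ≠ 1 := by linarith
    have hin : HasDerivAt (fun ψ => c * Real.cos ψ / s) (c * (-Real.sin ψ) / s) ψ :=
      ((Real.hasDerivAt_cos ψ).const_mul c).div_const s
    have harc := (Real.hasDerivAt_arcsin hu1 hu2).comp ψ hin
    have hF := harc.const_mul (-(1 / 2) : ℝ)
    refine hF.congr_deriv ?_
    have hpos := sin_sq_lb hc hψ
    set t := Real.sqrt (c ^ 2 * Real.sin ψ ^ 2 - 1) with ht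
    have ht0 : 0 < t := Real.sqrt_pos.2 hpos
    have ht2 : t ^ 2 = c ^ 2 * Real.sin ψ ^ 2 - 1 := Real.sq_sqrt hpos.le
    have hsc := Real.sin_sq_add_cos_sq ψ
    have h1u : 1 - (c * Real.cos ψ / s) ^ 2 = (t / s) ^ 2 := by
      field_simp
      nlinarith
    have hsq : Real.sqrt (1 - (c * Real.cos ψ / s) ^ 2) = t / s := by
      rw [h1u]
      exact Real.sqrt_sq (by positivity)
    rw [hsq]
    field_simp
  have hint : IntervalIntegrable
      (fun ψ => c * Real.sin ψ / (2 * Real.sqrt (c ^ 2 * Real.sin ψ ^ 2 - 1)))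
      MeasureTheory.volume (π / 3) (2 * π / 3) := by
    apply ContinuousOn.intervalIntegrable
    rw [Set.uIcc_of_le (by linarith)]
    apply ContinuousOn.div
    · exact (continuous_const.mul Real.continuous_sin).continuousOn
    · apply ContinuousOn.mul continuousOn_const
      apply Continuous.continuousOn
      exact Real.continuous_sqrt.comp (by continuity)
    · intro ψ hψ
      have := sin_sq_lb hc hψ
      positivity
  rw [intervalIntegral.integral_eq_sub_of_hasDerivAt hderiv hint]
  have e1 : Real.cos (2 * π / 3) = -(1 / 2) := by
    have e : (2 : ℝ) * π / 3 = π - π / 3 := by ring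
    rw [e, Real.cos_pi_sub, Real.cos_pi_div_three]
  have e2 : Real.cos (π / 3) = 1 / 2 := Real.cos_pi_div_three
  rw [e1, e2]
  have e3 : c * -(1 / 2) / s = -(c / (2 * s)) := by ring
  have e4 : c * (1 / 2) / s = c / (2 * s) := by ring
  rw [e3, e4, Real.arcsin_neg]
  ring

lemma lower_bound :
    π / 2 < ∫ ψ in (π / 3)..(2 * π / 3), (1 - Rm (6 / 5 * Real.sin ψ) ^ 2)⁻¹ := by
  have hpi := Real.pi_pos
  have hc : 2 / Real.sqrt 3 < 6 / 5 := two_div_sqrt3_lt le_rfl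
  have hc2 : (4:ℝ) / 3 < (6 / 5 : ℝ) ^ 2 := by norm_num
  set g : ℝ → ℝ := fun ψ =>
    1 / 2 + 6 / 5 * Real.sin ψ / (2 * Real.sqrt ((6 / 5 : ℝ) ^ 2 * Real.sin ψ ^ 2 - 1))
    with hg
  have hgint : IntervalIntegrable g MeasureTheory.volume (π / 3) (2 * π / 3) := by
    apply IntervalIntegrable.add intervalIntegrable_const
    apply ContinuousOn.intervalIntegrable
    rw [Set.uIcc_of_le (by linarith)]
    apply ContinuousOn.div
    · exact (continuous_const.mul Real.continuous_sin).continuousOn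
    · exact (continuous_const.mul
        (Real.continuous_sqrt.comp (by continuity))).continuousOn
    · intro ψ hψ
      have := sin_sq_lb hc2 hψ
      positivity
  have hmono : (∫ ψ in (π / 3)..(2 * π / 3), g ψ)
      ≤ ∫ ψ in (π / 3)..(2 * π / 3), (1 - Rm (6 / 5 * Real.sin ψ) ^ 2)⁻¹ := by
    apply intervalIntegral.integral_mono_on (by linarith) hgint
      (integrand_intervalIntegrable hRm hc)
    intro ψ hψ
    have hx := x_gt_one hc hψ
    have := Rm_lower hRm hx
    have e : (6 / 5 * Real.sin ψ) ^ 2 = (6 / 5 : ℝ) ^ 2 * Real.sin ψ ^ 2 := by ring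
    rw [e] at this
    exact this
  have hsplit : (∫ ψ in (π / 3)..(2 * π / 3), g ψ)
      = π / 6 + Real.arcsin (6 / 5 / (2 * Real.sqrt ((6 / 5 : ℝ) ^ 2 - 1))) := by
    rw [hg]
    rw [intervalIntegral.integral_add intervalIntegrable_const
      (by
        apply ContinuousOn.intervalIntegrable
        rw [Set.uIcc_of_le (by linarith)]
        apply ContinuousOn.div
        · exact (continuous_const.mul Real.continuous_sin).continuousOn
        · exact (continuous_const.mul
            (Real.continuous_sqrt.comp (by continuity))).continuousOn
        · intro ψ hψ
          have := sin_sq_lb hc2 hψ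
          positivity)]
    rw [ftc_arcsin hc2 (by norm_num), intervalIntegral.integral_const, smul_eq_mul]
    ring_nf
  have harcs : π / 3 < Real.arcsin (6 / 5 / (2 * Real.sqrt ((6 / 5 : ℝ) ^ 2 - 1))) := by
    have h925 : ((6 / 5 : ℝ) ^ 2 - 1) = 11 / 25 := by norm_num
    rw [h925]
    set s := Real.sqrt (11 / 25 : ℝ) with hs
    have hs0 : 0 < s := Real.sqrt_pos.2 (by norm_num)
    have hs2 : s ^ 2 = 11 / 25 := Real.sq_sqrt (by norm_num)
    have h3 := Real.sq_sqrt (by norm_num : (0:ℝ) ≤ 3)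
    have h3n := Real.sqrt_nonneg 3
    have e : π / 3 = Real.arcsin (Real.sqrt 3 / 2) := by
      rw [← Real.sin_pi_div_three, Real.arcsin_sin (by linarith) (by linarith)]
    rw [e]
    have hpos : (0:ℝ) < 6 / 5 / (2 * s) := by positivity
    apply Real.strictMonoOn_arcsin ⟨by nlinarith, by nlinarith⟩
      ⟨by linarith, by rw [div_le_one (by positivity)]; nlinarith⟩
    rw [div_lt_div_iff₀ (by norm_num) (by positivity)]
    nlinarith
  linarith

lemma upper_bound :
    (∫ ψ in (π / 3)..(2 * π / 3), (1 - Rm (3 * Real.sin ψ) ^ 2)⁻¹) < π / 2 := by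
  have hpi := Real.pi_pos
  have hc : 2 / Real.sqrt 3 < 3 := two_div_sqrt3_lt (by norm_num)
  have hmono : (∫ ψ in (π / 3)..(2 * π / 3), (1 - Rm (3 * Real.sin ψ) ^ 2)⁻¹)
      ≤ ∫ _ψ in (π / 3)..(2 * π / 3), (4 / 3 : ℝ) := by
    apply intervalIntegral.integral_mono_on (by linarith)
      (integrand_intervalIntegrable hRm hc) intervalIntegrable_const
    intro ψ hψ
    apply Rm_upper hRm
    have hs := sin_lb hψ
    have h3 := Real.sq_sqrt (by norm_num : (0:ℝ) ≤ 3)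
    have h3n := Real.sqrt_nonneg 3
    nlinarith
  rw [intervalIntegral.integral_const, smul_eq_mul] at hmono
  nlinarith

lemma f_anti {a b : ℝ} (ha : 2 / Real.sqrt 3 < a) (hab : a < b) :
    (∫ ψ in (π / 3)..(2 * π / 3), (1 - Rm (b * Real.sin ψ) ^ 2)⁻¹)
      < ∫ ψ in (π / 3)..(2 * π / 3), (1 - Rm (a * Real.sin ψ) ^ 2)⁻¹ := by
  have hpi := Real.pi_pos
  have hb : 2 / Real.sqrt 3 < b := ha.trans hab
  have hia := integrand_intervalIntegrable hRm ha
  have hib := integrand_intervalIntegrable hRm hb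
  have key : 0 < ∫ ψ in (π / 3)..(2 * π / 3),
      ((1 - Rm (a * Real.sin ψ) ^ 2)⁻¹ - (1 - Rm (b * Real.sin ψ) ^ 2)⁻¹) := by
    apply intervalIntegral.intervalIntegral_pos_of_pos_on (hia.sub hib) _ (by linarith)
    intro ψ hψ
    have hψ' : ψ ∈ Set.Icc (π / 3) (2 * π / 3) := Set.Ioo_subset_Icc_self hψ
    have hxa := x_gt_one ha hψ'
    have hsin : 0 < Real.sin ψ := by
      have hs := sin_lb hψ'
      have h3 : (0:ℝ) < Real.sqrt 3 := Real.sqrt_pos.2 (by norm_num)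
      linarith
    have hxlt : a * Real.sin ψ < b * Real.sin ψ := by
      apply mul_lt_mul_of_pos_right hab hsin
    have hRlt := Rm_anti hRm hxa hxlt
    obtain ⟨ha0, ha1, _⟩ := hRm _ hxa
    obtain ⟨hb0, hb1, _⟩ := hRm _ (hxa.trans hxlt)
    have h1 : 0 < 1 - Rm (a * Real.sin ψ) ^ 2 := by nlinarith
    have h2 : 1 - Rm (a * Real.sin ψ) ^ 2 < 1 - Rm (b * Real.sin ψ) ^ 2 := by nlinarith
    have := inv_strictAnti₀ h1 h2
    linarith
  rw [intervalIntegral.integral_sub hia hib] at key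
  linarith

lemma f_contOn {b : ℝ} :
    ContinuousOn (fun c => ∫ ψ in (π / 3)..(2 * π / 3),
      (1 - Rm (c * Real.sin ψ) ^ 2)⁻¹) (Set.Icc (6 / 5) b) := by
  have h3 : (0:ℝ) < Real.sqrt 3 := Real.sqrt_pos.2 (by norm_num)
  have h3sq := Real.sq_sqrt (by norm_num : (0:ℝ) ≤ 3)
  set m : ℝ := 6 / 5 * (Real.sqrt 3 / 2) with hm
  have hm1 : 1 < m := by nlinarith [sqrt3_lt]
  set H : ℝ → ℝ → ℝ := fun c ψ => (1 - Rm (max (c * Real.sin ψ) m) ^ 2)⁻¹ with hH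
  have hHc : Continuous (Function.uncurry H) := by
    apply ContinuousOn.comp_continuous (G_contOn hRm)
      (((continuous_fst.mul (Real.continuous_sin.comp continuous_snd)).max
        continuous_const))
    intro p
    exact lt_of_lt_of_le hm1 (le_max_right _ _)
  have hg : Continuous fun c => ∫ ψ in (π / 3)..(2 * π / 3), H c ψ :=
    intervalIntegral.continuous_parametric_intervalIntegral_of_continuous' hHc _ _
  apply ContinuousOn.congr hg.continuousOn
  intro c hc
  apply intervalIntegral.integral_congr
  intro ψ hψ
  rw [Set.uIcc_of_le (by linarith [Real.pi_pos])] at hψ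
  have hs := sin_lb hψ
  have hmax : max (c * Real.sin ψ) m = c * Real.sin ψ := by
    apply max_eq_left
    rw [hm]
    apply mul_le_mul hc.1 hs (by positivity) (by linarith [hc.1])
  simp only [hH, hmax]

end Rm

theorem stmt_19 (Rm : ℝ → ℝ)
    (hRm : ∀ x : ℝ, 1 < x → 0 < Rm x ∧ Rm x < 1 ∧ K (Rm x) = x) :
    ∃! c : ℝ, 2 / Real.sqrt 3 < c ∧
      (∫ ψ in (π / 3)..(2 * π / 3), (1 - (Rm (c * Real.sin ψ)) ^ 2)⁻¹) = π / 2 := by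
  set F : ℝ → ℝ := fun c => ∫ ψ in (π / 3)..(2 * π / 3),
    (1 - Rm (c * Real.sin ψ) ^ 2)⁻¹ with hF
  have hlow : π / 2 < F (6 / 5) := lower_bound hRm
  have hup : F 3 < π / 2 := upper_bound hRm
  have hcont : ContinuousOn F (Set.Icc (6 / 5) 3) := f_contOn hRm
  have hsub : π / 2 ∈ Set.Icc (F 3) (F (6 / 5)) := ⟨hup.le, hlow.le⟩
  obtain ⟨c, hcmem, hc⟩ := intermediate_value_Icc' (by norm_num) hcont hsub
  refine ⟨c, ⟨two_div_sqrt3_lt hcmem.1, hc⟩, ?_⟩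
  rintro c' ⟨hc'1, hc'2⟩
  have hcgt : 2 / Real.sqrt 3 < c := two_div_sqrt3_lt hcmem.1
  by_contra hne
  change F c' = π / 2 at hc'2
  rcases lt_or_gt_of_ne hne with h | h
  · have h2 : F c < F c' := f_anti hRm hc'1 h
    rw [hc, hc'2] at h2
    exact lt_irrefl _ h2
  · have h2 : F c' < F c := f_anti hRm hcgt h
    rw [hc, hc'2] at h2
    exact lt_irrefl _ h2
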